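/- arXiv:1408.4551 — 2 statements merged into one kernel-verified Lean document; each statement's English description precedes it below -/
import Mathlib

section
/- Let f : ℝⁿ → ℝᵏ be a linear map, let u, v ∈ ℝⁿ be nonzero, set u' = u/‖u‖ and v' = v/‖v‖, and let 0 < ε < 1. Suppose that (1−ε)‖u'+v'‖² ≤ ‖f(u'+v')‖² ≤ (1+ε)‖u'+v'‖² and (1−ε)‖u'−v'‖² ≤ ‖f(u'−v')‖² ≤ (1+ε)‖u'−v'‖². Then |uᵀv − f(u)ᵀf(v)| ≤ ε‖u‖‖v‖. -/
open scoped RealInnerProductSpace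

/-- **deterministic core of inner-product preservation.** If a linear map
`f : ℝⁿ → ℝᵏ` distorts the squared norms of `u' + v'` and `u' - v'` (where `u' = u/‖u‖`,
`v' = v/‖v‖`) by a factor at most `1 ± ε`, then `|uᵀv - f(u)ᵀf(v)| ≤ ε‖u‖‖v‖`. -/
theorem stmt_5 (n k : ℕ)
    (f : EuclideanSpace ℝ (Fin n) →ₗ[ℝ] EuclideanSpace ℝ (Fin k))
    (u v : EuclideanSpace ℝ (Fin n)) (hu : u ≠ 0) (hv : v ≠ 0)
    (u' v' : EuclideanSpace ℝ (Fin n)) (hu' : u' = ‖u‖⁻¹ • u) (hv' : v' = ‖v‖⁻¹ • v)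
    (ε : ℝ) (hε0 : 0 < ε) (hε1 : ε < 1)
    (h1 : (1 - ε) * ‖u' + v'‖ ^ 2 ≤ ‖f (u' + v')‖ ^ 2 ∧
      ‖f (u' + v')‖ ^ 2 ≤ (1 + ε) * ‖u' + v'‖ ^ 2)
    (h2 : (1 - ε) * ‖u' - v'‖ ^ 2 ≤ ‖f (u' - v')‖ ^ 2 ∧
      ‖f (u' - v')‖ ^ 2 ≤ (1 + ε) * ‖u' - v'‖ ^ 2) :
    |⟪u, v⟫ - ⟪f u, f v⟫| ≤ ε * ‖u‖ * ‖v‖ := by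

  have hun : ‖u‖ ≠ 0 := norm_ne_zero_iff.mpr hu
  have hvn : ‖v‖ ≠ 0 := norm_ne_zero_iff.mpr hv
  have hu'n : ‖u'‖ = 1 := by
    rw [hu', norm_smul, norm_inv, norm_norm, inv_mul_cancel₀ hun]
  have hv'n : ‖v'‖ = 1 := by
    rw [hv', norm_smul, norm_inv, norm_norm, inv_mul_cancel₀ hvn]
  have hP : ‖u' + v'‖ ^ 2 = ‖u'‖ ^ 2 + 2 * ⟪u', v'⟫ + ‖v'‖ ^ 2 := norm_add_sq_real u' v'
  have hM : ‖u' - v'‖ ^ 2 = ‖u'‖ ^ 2 - 2 * ⟪u', v'⟫ + ‖v'‖ ^ 2 := norm_sub_sq_real u' v'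
  have hfP : ‖f (u' + v')‖ ^ 2 = ‖f u'‖ ^ 2 + 2 * ⟪f u', f v'⟫ + ‖f v'‖ ^ 2 := by
    rw [map_add]; exact norm_add_sq_real (f u') (f v')
  have hfM : ‖f (u' - v')‖ ^ 2 = ‖f u'‖ ^ 2 - 2 * ⟪f u', f v'⟫ + ‖f v'‖ ^ 2 := by
    rw [map_sub]; exact norm_sub_sq_real (f u') (f v')
  have h3u : ‖u'‖ ^ 2 = 1 := by rw [hu'n]; norm_num
  have h3v : ‖v'‖ ^ 2 = 1 := by rw [hv'n]; norm_num
  have key : |⟪u', v'⟫ - ⟪f u', f v'⟫| ≤ ε := by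
    rw [abs_le]
    constructor <;> nlinarith [h1.1, h1.2, h2.1, h2.2]
  have e1 : ⟪u', v'⟫ = ‖u‖⁻¹ * ‖v‖⁻¹ * ⟪u, v⟫ := by
    rw [hu', hv', real_inner_smul_left, real_inner_smul_right]; ring
  have e2 : ⟪f u', f v'⟫ = ‖u‖⁻¹ * ‖v‖⁻¹ * ⟪f u, f v⟫ := by
    rw [hu', hv', map_smul, map_smul, real_inner_smul_left, real_inner_smul_right]; ring
  have hpos : 0 < ‖u‖ * ‖v‖ := by
    have := (norm_pos_iff.mpr hu); have := (norm_pos_iff.mpr hv); positivity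
  rw [e1, e2, ← mul_sub, abs_mul, abs_of_pos (by positivity : (0:ℝ) < ‖u‖⁻¹ * ‖v‖⁻¹)] at key
  calc |⟪u, v⟫ - ⟪f u, f v⟫| = (‖u‖ * ‖v‖) * (‖u‖⁻¹ * ‖v‖⁻¹ * |⟪u, v⟫ - ⟪f u, f v⟫|) := by
        field_simp
    _ ≤ (‖u‖ * ‖v‖) * ε := mul_le_mul_of_nonneg_left key hpos.le
    _ = ε * ‖u‖ * ‖v‖ := by ring
end

section
/- Let n > k ≥ 1, let K ⊆ ℝⁿ be a compact polytope with extreme point set ext(K), let M ∈ ℝ^{n×n}, q ∈ ℝⁿ, let R ∈ ℝ^{n×k} be any matrix, and set f(u) = √(n/k)·Rᵀu, K̃ = f(K), M̃ = RᵀMR, q̃ = √(n/k)·Rᵀq, and M' = MRRᵀ. Let x₀ ∈ K, let ε ∈ (0,1), and suppose: (i) x̃ = √(n/k)·Rᵀx₀ is a solution of AVI(K̃, M̃, q̃); and (ii) for every x_e ∈ ext(K), |(x_e − x₀)ᵀ(q + Mx₀) − f(x_e − x₀)ᵀ f(q + Mx₀)| ≤ ε‖x_e − x₀‖‖q + Mx₀‖.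 Then for every x_e ∈ ext(K): (x_e − x₀)ᵀ(q + Mx₀) ≥ (n/k)·(x_e − x₀)ᵀ RRᵀ(M − M')x₀ − ε‖x_e − x₀‖‖q + Mx₀‖. -/
open Matrix
open scoped RealInnerProductSpace

lemma mulEL {a b c : ℕ} (A : Matrix (Fin a) (Fin b) ℝ) (B : Matrix (Fin b) (Fin c) ℝ)
    (x : EuclideanSpace ℝ (Fin c)) :
    Matrix.toEuclideanLin (A * B) x = Matrix.toEuclideanLin A (Matrix.toEuclideanLin B x) := by
  simp [Matrix.toEuclideanLin_apply, Matrix.mulVec_mulVec]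

lemma adjEL {a b : ℕ} (A : Matrix (Fin a) (Fin b) ℝ) (x : EuclideanSpace ℝ (Fin a))
    (y : EuclideanSpace ℝ (Fin b)) :
    ⟪Matrix.toEuclideanLin Aᵀ x, y⟫ = ⟪x, Matrix.toEuclideanLin A y⟫ := by
  have h : Aᵀ = Aᴴ := (Matrix.conjTranspose_eq_transpose_of_trivial A).symm
  rw [h, Matrix.toEuclideanLin_conjTranspose_eq_adjoint, LinearMap.adjoint_inner_left]


/-- **deterministic error bound for the preimage of the projected
solution.** With `f u = √(n/k) Rᵀ u`, `K̃ = f(K)`, `M̃ = RᵀMR`, `q̃ = √(n/k) Rᵀ q`,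
`M' = MRRᵀ`: if `f x₀` solves `AVI(K̃, M̃, q̃)` and the inner products
`(x_e - x₀)ᵀ(q + Mx₀)` are `ε`-preserved by `f` at every extreme point `x_e` of `K`, then
`(x_e - x₀)ᵀ(q + Mx₀) ≥ (n/k)(x_e - x₀)ᵀRRᵀ(M - M')x₀ - ε‖x_e - x₀‖‖q + Mx₀‖`
for every extreme point `x_e` of `K`. -/
theorem stmt_9 (n k : ℕ) (hk : 1 ≤ k) (hkn : k < n)
    (K : Set (EuclideanSpace ℝ (Fin n)))
    (hpoly : ∃ S : Finset (EuclideanSpace ℝ (Fin n)), K = convexHull ℝ (S : Set _))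
    (M : Matrix (Fin n) (Fin n) ℝ) (q : EuclideanSpace ℝ (Fin n))
    (R : Matrix (Fin n) (Fin k) ℝ)
    (f : EuclideanSpace ℝ (Fin n) → EuclideanSpace ℝ (Fin k))
    (hf : ∀ u, f u = Real.sqrt ((n : ℝ) / k) • Matrix.toEuclideanLin Rᵀ u)
    (x₀ : EuclideanSpace ℝ (Fin n)) (hx₀ : x₀ ∈ K)
    (ε : ℝ) (hε0 : 0 < ε) (hε1 : ε < 1)
    (hsol : ∀ ytil ∈ f '' K,
      ⟪ytil - f x₀, Matrix.toEuclideanLin (Rᵀ * M * R) (f x₀)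
          + Real.sqrt ((n : ℝ) / k) • Matrix.toEuclideanLin Rᵀ q⟫ ≥ 0)
    (hpres : ∀ xe ∈ Set.extremePoints ℝ K,
      |⟪xe - x₀, q + Matrix.toEuclideanLin M x₀⟫
          - ⟪f (xe - x₀), f (q + Matrix.toEuclideanLin M x₀)⟫|
        ≤ ε * ‖xe - x₀‖ * ‖q + Matrix.toEuclideanLin M x₀‖) :
    ∀ xe ∈ Set.extremePoints ℝ K,
      ⟪xe - x₀, q + Matrix.toEuclideanLin M x₀⟫ ≥
        ((n : ℝ) / k) * ⟪xe - x₀, Matrix.toEuclideanLin (R * Rᵀ * (M - M * R * Rᵀ)) x₀⟫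
          - ε * ‖xe - x₀‖ * ‖q + Matrix.toEuclideanLin M x₀‖ := by
  intro xe hxe
  set c : ℝ := Real.sqrt ((n : ℝ) / k) with hc
  have hnk0 : (0:ℝ) ≤ (n : ℝ) / k := by positivity
  have hc2 : c * c = (n : ℝ) / k := Real.mul_self_sqrt hnk0
  set v := xe - x₀ with hv
  set w := q + Matrix.toEuclideanLin M x₀ with hw
  have h1 : ⟪v, w⟫ ≥ ⟪f v, f w⟫ - ε * ‖v‖ * ‖w‖ := by
    have := abs_le.mp (hpres xe hxe)
    rw [hv]; linarith [this.1, this.2]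
  have h2 : ⟪f xe - f x₀, Matrix.toEuclideanLin (Rᵀ * M * R) (f x₀)
      + c • Matrix.toEuclideanLin Rᵀ q⟫ ≥ 0 := hsol (f xe) ⟨xe, hxe.1, rfl⟩
  have hfv : f v = c • Matrix.toEuclideanLin Rᵀ v := hf v
  have hfxsub : f xe - f x₀ = c • Matrix.toEuclideanLin Rᵀ v := by
    rw [hf xe, hf x₀, hv, ← smul_sub, ← map_sub]
  have hfw : f w = c • (Matrix.toEuclideanLin Rᵀ q + Matrix.toEuclideanLin (Rᵀ * M) x₀) := by
    rw [hf w, hw, map_add, mulEL]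
  have hMRfx : Matrix.toEuclideanLin (Rᵀ * M * R) (f x₀)
      = c • Matrix.toEuclideanLin (Rᵀ * M * R * Rᵀ) x₀ := by
    rw [hf x₀, LinearMap.map_smul, mulEL (Rᵀ * M * R) Rᵀ]
  have key : ⟪f v, f w⟫ = ⟪f xe - f x₀, Matrix.toEuclideanLin (Rᵀ * M * R) (f x₀)
        + c • Matrix.toEuclideanLin Rᵀ q⟫
      + ((n : ℝ) / k) * ⟪v, Matrix.toEuclideanLin (R * Rᵀ * (M - M * R * Rᵀ)) x₀⟫ := by
    rw [hfv, hfw, hfxsub, hMRfx, ← smul_add]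
    rw [real_inner_smul_left, real_inner_smul_right, real_inner_smul_left,
      real_inner_smul_right]
    rw [← hc2]
    have hadj : ⟪v, Matrix.toEuclideanLin (R * Rᵀ * (M - M * R * Rᵀ)) x₀⟫
        = ⟪Matrix.toEuclideanLin Rᵀ v, Matrix.toEuclideanLin (Rᵀ * (M - M * R * Rᵀ)) x₀⟫ := by
      rw [show R * Rᵀ * (M - M * R * Rᵀ) = R * (Rᵀ * (M - M * R * Rᵀ)) from
        Matrix.mul_assoc _ _ _, mulEL R (Rᵀ * (M - M * R * Rᵀ)), adjEL]
    rw [hadj]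
    have hexp : Matrix.toEuclideanLin (Rᵀ * (M - M * R * Rᵀ)) x₀
        = Matrix.toEuclideanLin (Rᵀ * M) x₀ - Matrix.toEuclideanLin (Rᵀ * M * R * Rᵀ) x₀ := by
      rw [show Rᵀ * (M - M * R * Rᵀ) = Rᵀ * M - Rᵀ * M * R * Rᵀ by rw [Matrix.mul_sub, ← Matrix.mul_assoc, ← Matrix.mul_assoc], map_sub]
      rfl
    rw [hexp, inner_sub_right, inner_add_right, inner_add_right]
    ring
  rw [key] at h1
  linarith
end
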